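/- Let Ω ⊆ ℝⁿ be open, let u : ℝⁿ → ℝ be a C¹ function whose (compact) support is contained in Ω, and let v, w be C² real-valued functions on Ω. Then ∫_Ω e^{2v}|∇u|² dx ≥ ∫_Ω e^{2v}(Δv + Δw + |∇v|² − |∇w|²) u² dx. -/

import Mathlib

open MeasureTheory Real

/-- The `i`-th partial derivative of a function on `ℝⁿ`. -/
noncomputable def pd (n : ℕ) (f : EuclideanSpace ℝ (Fin n) → ℝ)
    (i : Fin n) (x : EuclideanSpace ℝ (Fin n)) : ℝ :=
  fderiv ℝ f x (EuclideanSpace.single i 1)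

/-- The squared Euclidean norm of the gradient, `|∇f|² = Σᵢ (∂ᵢf)²`. -/
noncomputable def gradSq (n : ℕ) (f : EuclideanSpace ℝ (Fin n) → ℝ)
    (x : EuclideanSpace ℝ (Fin n)) : ℝ :=
  ∑ i, (pd n f i x) ^ 2

/-- The Euclidean Laplacian, `Δf = Σᵢ ∂ᵢ²f`. -/
noncomputable def lap (n : ℕ) (f : EuclideanSpace ℝ (Fin n) → ℝ)
    (x : EuclideanSpace ℝ (Fin n)) : ℝ :=
  ∑ i, pd n (pd n f i) i x

lemma pd_contDiff_one {n : ℕ} {f : EuclideanSpace ℝ (Fin n) → ℝ}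
    (hf : ContDiff ℝ 2 f) (i : Fin n) : ContDiff ℝ 1 (pd n f i) := by
  have h : ContDiff ℝ 1 (fderiv ℝ f) := hf.fderiv_right (by norm_num)
  exact (ContinuousLinearMap.apply ℝ ℝ (EuclideanSpace.single i 1)).contDiff.comp h

lemma pd_continuous {n : ℕ} {f : EuclideanSpace ℝ (Fin n) → ℝ}
    (hf : ContDiff ℝ 1 f) (i : Fin n) : Continuous (pd n f i) := by
  have h : ContDiff ℝ 0 (fderiv ℝ f) := hf.fderiv_right (by norm_num)
  exact ((ContinuousLinearMap.apply ℝ ℝ (EuclideanSpace.single i 1)).contDiff.comp h).continuous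

lemma fderiv_exp_mul_sq {n : ℕ} {V u : EuclideanSpace ℝ (Fin n) → ℝ}
    (hV : ContDiff ℝ 2 V) (hu : ContDiff ℝ 1 u) (x y : EuclideanSpace ℝ (Fin n)) :
    fderiv ℝ (fun z => Real.exp (2 * V z) * u z ^ 2) x y
      = Real.exp (2 * V x) * (2 * fderiv ℝ V x y * u x ^ 2 + 2 * u x * fderiv ℝ u x y) := by
  have hVx : HasFDerivAt V (fderiv ℝ V x) x :=
    ((hV.differentiable (by norm_num)) x).hasFDerivAt
  have hux : HasFDerivAt u (fderiv ℝ u x) x :=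
    ((hu.differentiable one_ne_zero) x).hasFDerivAt
  have h2V : HasFDerivAt (fun z => 2 * V z) ((2:ℝ) • fderiv ℝ V x) x := hVx.const_mul 2
  have hexp : HasFDerivAt (fun z => Real.exp (2 * V z))
      (Real.exp (2 * V x) • (2:ℝ) • fderiv ℝ V x) x :=
    h2V.exp
  have hu2 := hux.mul hux
  have hF := hexp.mul hu2
  have hfun : (fun z => Real.exp (2 * V z) * u z ^ 2)
      = fun z => Real.exp (2 * V z) * (u z * u z) := by funext z; ring
  rw [hfun, show (fun z => Real.exp (2 * V z) * (u z * u z))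
      = (fun z => Real.exp (2 * V z)) * (u * u) from rfl, hF.fderiv]
  simp [smul_smul]
  ring

/-- Integrability of a continuous function supported in a compact support. -/
lemma integrable_of_support_subset {n : ℕ} {f g : EuclideanSpace ℝ (Fin n) → ℝ}
    (hf : Continuous f) (hg : HasCompactSupport g)
    (h : Function.support f ⊆ tsupport g) : Integrable f (volume) := by
  have h1 : tsupport f ⊆ tsupport g := closure_minimal h (isClosed_tsupport g)
  have h2 : HasCompactSupport f := IsCompact.of_isClosed_subset hg (isClosed_tsupport f) h1
  exact hf.integrable_of_hasCompactSupport h2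

/-- Flat-case exponentially weighted Poincaré inequality: for `u` of class `C¹`
with compact support in the open set `Ω` and `v, w` of class `C²` on `Ω`,
`∫_Ω e^{2v}|∇u|² ≥ ∫_Ω e^{2v}(Δv + Δw + |∇v|² − |∇w|²) u²`. -/
theorem weighted_poincare_exp (n : ℕ) (Ω : Set (EuclideanSpace ℝ (Fin n)))
    (hΩ : IsOpen Ω) (u v w : EuclideanSpace ℝ (Fin n) → ℝ)
    (hu : ContDiff ℝ 1 u) (husupp : HasCompactSupport u) (huΩ : tsupport u ⊆ Ω)
    (hv : ContDiffOn ℝ 2 v Ω) (hw : ContDiffOn ℝ 2 w Ω) :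
    ∫ x in Ω, Real.exp (2 * v x) * gradSq n u x ≥
      ∫ x in Ω, Real.exp (2 * v x) *
        (lap n v x + lap n w x + gradSq n v x - gradSq n w x) * (u x) ^ 2 := by
  classical
  -- Step 1: smooth cutoff and global extensions V, W of v, w
  obtain ⟨χ, hχ0, hχ1, hχmem⟩ := exists_contMDiffMap_zero_one_nhds_of_isClosed (n := (⊤ : ℕ∞))
    (modelWithCornersSelf ℝ (EuclideanSpace ℝ (Fin n))) (isClosed_compl_iff.2 hΩ)
    (isClosed_tsupport u) (Set.disjoint_left.2 fun x hx hx' => hx (huΩ hx'))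
  have hχsmooth : ContDiff ℝ 2 (⇑χ) := by
    refine (contMDiff_iff_contDiff.1 χ.contMDiff).of_le ?_
    rw [show ((2:WithTop ℕ∞)) = ((2:ℕ∞):WithTop ℕ∞) by norm_cast]
    exact_mod_cast (le_top : (2:ℕ∞) ≤ ⊤)
  obtain ⟨U₀, hU₀o, hU₀s, hU₀⟩ := mem_nhdsSet_iff_exists.1 hχ0
  obtain ⟨U₁, hU₁o, hU₁s, hU₁⟩ := mem_nhdsSet_iff_exists.1 hχ1
  have hext : ∀ f : EuclideanSpace ℝ (Fin n) → ℝ, ContDiffOn ℝ 2 f Ω →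
      ContDiff ℝ 2 (fun x => χ x * f x) := by
    intro f hf
    rw [contDiff_iff_contDiffAt]
    intro x
    by_cases hx : x ∈ Ω
    · exact ((hχsmooth.contDiffOn.mul hf).contDiffAt (hΩ.mem_nhds hx))
    · have : ∀ y ∈ U₀, χ y * f y = 0 := fun y hy => by
        have h0 : χ y = 0 := hU₀ hy
        simp [h0]
      exact ContDiffAt.congr_of_eventuallyEq contDiffAt_const
        (Filter.eventuallyEq_of_mem (hU₀o.mem_nhds (hU₀s hx)) this)
  set V : EuclideanSpace ℝ (Fin n) → ℝ := fun x => χ x * v x with hVdef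
  set W : EuclideanSpace ℝ (Fin n) → ℝ := fun x => χ x * w x with hWdef
  have hV2 : ContDiff ℝ 2 V := hext v hv
  have hW2 : ContDiff ℝ 2 W := hext w hw
  have hVeq : Set.EqOn V v U₁ := fun y hy => by
    have h1 : χ y = 1 := hU₁ hy
    simp [hVdef, h1]
  have hWeq : Set.EqOn W w U₁ := fun y hy => by
    have h1 : χ y = 1 := hU₁ hy
    simp [hWdef, h1]
  -- first derivatives agree on U₁
  have hpdeq : ∀ (V' v' : EuclideanSpace ℝ (Fin n) → ℝ), Set.EqOn V' v' U₁ →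
      ∀ i, Set.EqOn (pd n V' i) (pd n v' i) U₁ := by
    intro V' v' hEq i y hy
    unfold pd
    rw [Filter.EventuallyEq.fderiv_eq
      (Filter.eventuallyEq_of_mem (hU₁o.mem_nhds hy) hEq)]
  -- global auxiliary functions
  set ψ : EuclideanSpace ℝ (Fin n) → ℝ := fun x => V x + W x with hψdef
  have hψ2 : ContDiff ℝ 2 ψ := hV2.add hW2
  set F : EuclideanSpace ℝ (Fin n) → ℝ := fun x => Real.exp (2 * V x) * u x ^ 2 with hFdef
  have hF1 : ContDiff ℝ 1 F := by
    have he : ContDiff ℝ 1 (fun x => Real.exp (2 * V x)) :=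
      Real.contDiff_exp.comp (contDiff_const.mul (hV2.of_le one_le_two))
    exact he.mul (hu.pow 2)
  -- vanishing outside the support of u
  have hu0 : ∀ x, x ∉ tsupport u → u x = 0 := fun x hx => image_eq_zero_of_notMem_tsupport hx
  have hdu0 : ∀ x, x ∉ tsupport u → ∀ i, pd n u i x = 0 := by
    intro x hx i
    have h : fderiv ℝ u x = 0 := by
      by_contra h
      exact hx (support_fderiv_subset ℝ (Function.mem_support.2 h))
    simp [pd, h]
  have hsuppF : Function.support F ⊆ tsupport u := by
    intro x hx
    by_contra hK
    exact hx (by simp [hFdef, hu0 x hK])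
  have htsuppF : tsupport F ⊆ tsupport u := closure_minimal hsuppF (isClosed_tsupport u)
  have hdF0 : ∀ x, x ∉ tsupport u → fderiv ℝ F x = 0 := fun x hx => by
    by_contra h
    exact hx (htsuppF (support_fderiv_subset ℝ (Function.mem_support.2 h)))
  -- formula for the derivative of F
  have hdF : ∀ (x : EuclideanSpace ℝ (Fin n)) (i : Fin n),
      fderiv ℝ F x (EuclideanSpace.single i 1)
        = Real.exp (2 * V x) * (2 * pd n V i x * u x ^ 2 + 2 * u x * pd n u i x) := by
    intro x i
    rw [hFdef]
    exact fderiv_exp_mul_sq hV2 hu x (EuclideanSpace.single i 1)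
  -- additivity of derivatives of ψ
  have hpψ : ∀ (x : EuclideanSpace ℝ (Fin n)) (i : Fin n),
      pd n ψ i x = pd n V i x + pd n W i x := by
    intro x i
    show fderiv ℝ ψ x _ = _
    rw [hψdef, fderiv_fun_add ((hV2.differentiable two_ne_zero) x)
      ((hW2.differentiable two_ne_zero) x)]
    rfl
  have hlapψ : ∀ x, lap n ψ x = lap n V x + lap n W x := by
    intro x
    unfold lap
    rw [← Finset.sum_add_distrib]
    refine Finset.sum_congr rfl (fun i _ => ?_)
    have hfun : pd n ψ i = fun y => pd n V i y + pd n W i y := funext (fun y => hpψ y i)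
    have h1 : pd n (pd n ψ i) i x = pd n (fun y => pd n V i y + pd n W i y) i x := by
      rw [hfun]
    rw [h1]
    show fderiv ℝ (fun y => pd n V i y + pd n W i y) x _ = _
    rw [fderiv_fun_add (((pd_contDiff_one hV2 i).differentiable one_ne_zero) x)
      (((pd_contDiff_one hW2 i).differentiable one_ne_zero) x)]
    rfl
  -- integrability helper
  have hInt : ∀ f : EuclideanSpace ℝ (Fin n) → ℝ, Continuous f →
      Function.support f ⊆ tsupport u → Integrable f volume :=
    fun f hf hs => integrable_of_support_subset hf husupp hs
  -- continuity facts
  have hcF : Continuous F := hF1.continuous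
  have hcpdu : ∀ i, Continuous (pd n u i) := fun i => pd_continuous hu i
  have hcpdV : ∀ i, Continuous (pd n V i) := fun i => (pd_contDiff_one hV2 i).continuous
  have hcpdW : ∀ i, Continuous (pd n W i) := fun i => (pd_contDiff_one hW2 i).continuous
  have hcpdψ : ∀ i, Continuous (pd n ψ i) := fun i => (pd_contDiff_one hψ2 i).continuous
  have hcpd2ψ : ∀ i, Continuous (pd n (pd n ψ i) i) :=
    fun i => pd_continuous (pd_contDiff_one hψ2 i) i
  have hcpdF : ∀ i, Continuous (fun x => fderiv ℝ F x (EuclideanSpace.single i 1)) :=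
    fun i => pd_continuous hF1 i
  have hclapψ : Continuous (lap n ψ) := continuous_finset_sum _ (fun i _ => hcpd2ψ i)
  have hcgradu : Continuous (gradSq n u) :=
    continuous_finset_sum _ (fun i _ => (hcpdu i).pow 2)
  have hcexpV : Continuous (fun x => Real.exp (2 * V x)) :=
    Real.continuous_exp.comp (continuous_const.mul hV2.continuous)
  have hcu : Continuous u := hu.continuous
  -- the integration by parts step, coordinate by coordinate
  have hIBPi : ∀ i : Fin n, ∫ x, F x * pd n (pd n ψ i) i x
      = - ∫ x, fderiv ℝ F x (EuclideanSpace.single i 1) * pd n ψ i x := by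
    intro i
    have h1 : Integrable (fun x => fderiv ℝ F x (EuclideanSpace.single i 1) * pd n ψ i x)
        volume := by
      refine hInt _ ((hcpdF i).mul (hcpdψ i)) (fun x hx => ?_)
      by_contra hK
      exact hx (by simp [hdF0 x hK])
    have h2 : Integrable (fun x => F x * fderiv ℝ (pd n ψ i) x (EuclideanSpace.single i 1))
        volume := by
      refine hInt _ (hcF.mul (hcpd2ψ i)) (fun x hx => ?_)
      by_contra hK
      exact hx (by simp [hFdef, hu0 x hK])
    have h3 : Integrable (fun x => F x * pd n ψ i x) volume := by
      refine hInt _ (hcF.mul (hcpdψ i)) (fun x hx => ?_)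
      by_contra hK
      exact hx (by simp [hFdef, hu0 x hK])
    exact integral_mul_fderiv_eq_neg_fderiv_mul_of_integrable h1 h2 h3
      (fun x _ => hF1.differentiable one_ne_zero x)
      (fun x _ => (pd_contDiff_one hψ2 i).differentiable one_ne_zero x)
  -- global integrands
  set P : EuclideanSpace ℝ (Fin n) → ℝ := fun x => Real.exp (2 * V x) * gradSq n u x with hPdef
  set Q : EuclideanSpace ℝ (Fin n) → ℝ := fun x => Real.exp (2 * V x) *
    (lap n V x + lap n W x + gradSq n V x - gradSq n W x) * u x ^ 2 with hQdef
  set R : EuclideanSpace ℝ (Fin n) → ℝ := fun x => Real.exp (2 * V x) *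
    ∑ i, (pd n u i x + u x * pd n ψ i x) ^ 2 with hRdef
  set G : EuclideanSpace ℝ (Fin n) → ℝ := fun x =>
    ∑ i, fderiv ℝ F x (EuclideanSpace.single i 1) * pd n ψ i x with hGdef
  set FL : EuclideanSpace ℝ (Fin n) → ℝ := fun x => F x * lap n ψ x with hFLdef
  -- continuity of second derivatives of V and W
  have hcpd2V : ∀ i, Continuous (pd n (pd n V i) i) :=
    fun i => pd_continuous (pd_contDiff_one hV2 i) i
  have hcpd2W : ∀ i, Continuous (pd n (pd n W i) i) :=
    fun i => pd_continuous (pd_contDiff_one hW2 i) i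
  -- integrability of all global integrands
  have hintP : Integrable P volume := by
    refine hInt _ (hcexpV.mul hcgradu) (fun x hx => ?_)
    by_contra hK
    exact hx (by simp [hPdef, gradSq, hdu0 x hK])
  have hintQ : Integrable Q volume := by
    have hc : Continuous Q := by
      rw [hQdef]
      exact (hcexpV.mul ((((continuous_finset_sum _ (fun i _ => hcpd2V i)).add
        (continuous_finset_sum _ (fun i _ => hcpd2W i))).add
        (continuous_finset_sum _ (fun i _ => (hcpdV i).pow 2))).sub
        (continuous_finset_sum _ (fun i _ => (hcpdW i).pow 2)))).mul (hcu.pow 2)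
    refine hInt _ hc (fun x hx => ?_)
    by_contra hK
    exact hx (by simp [hQdef, lap, gradSq, hu0 x hK])
  have hintR : Integrable R volume := by
    have hc : Continuous R := hcexpV.mul
      (continuous_finset_sum _ (fun i _ => ((hcpdu i).add (hcu.mul (hcpdψ i))).pow 2))
    refine hInt _ hc (fun x hx => ?_)
    by_contra hK
    exact hx (by simp [hRdef, hdu0 x hK, hu0 x hK])
  have hintG : Integrable G volume := by
    have hc : Continuous G := continuous_finset_sum _ (fun i _ => (hcpdF i).mul (hcpdψ i))
    refine hInt _ hc (fun x hx => ?_)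
    by_contra hK
    exact hx (by simp [hGdef, hdF0 x hK])
  have hintFL : Integrable FL volume := by
    refine hInt _ (hcF.mul hclapψ) (fun x hx => ?_)
    by_contra hK
    exact hx (by simp [hFLdef, hFdef, hu0 x hK])
  have hintFLi : ∀ i : Fin n, Integrable (fun x => F x * pd n (pd n ψ i) i x) volume := by
    intro i
    refine hInt _ (hcF.mul (hcpd2ψ i)) (fun x hx => ?_)
    by_contra hK
    exact hx (by simp [hFdef, hu0 x hK])
  have hintGi : ∀ i : Fin n, Integrable
      (fun x => fderiv ℝ F x (EuclideanSpace.single i 1) * pd n ψ i x) volume := by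
    intro i
    refine hInt _ ((hcpdF i).mul (hcpdψ i)) (fun x hx => ?_)
    by_contra hK
    exact hx (by simp [hdF0 x hK])
  -- summed integration by parts: ∫ FL = - ∫ G
  have hFLG : ∫ x, FL x = - ∫ x, G x := by
    have h1 : ∀ x, FL x = ∑ i, F x * pd n (pd n ψ i) i x := fun x => by
      simp [hFLdef, lap, Finset.mul_sum]
    calc ∫ x, FL x = ∫ x, ∑ i, F x * pd n (pd n ψ i) i x := by simp only [h1]
      _ = ∑ i, ∫ x, F x * pd n (pd n ψ i) i x := integral_finset_sum _ (fun i _ => hintFLi i)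
      _ = ∑ i, -∫ x, fderiv ℝ F x (EuclideanSpace.single i 1) * pd n ψ i x :=
          Finset.sum_congr rfl (fun i _ => hIBPi i)
      _ = -∑ i, ∫ x, fderiv ℝ F x (EuclideanSpace.single i 1) * pd n ψ i x := by
          rw [Finset.sum_neg_distrib]
      _ = - ∫ x, G x := by
          rw [hGdef, integral_finset_sum _ (fun i _ => hintGi i)]
  -- the pointwise algebraic identity
  have hkey : ∀ x, P x - Q x = R x - FL x - G x := by
    intro x
    have hGx : G x = Real.exp (2 * V x) *
        ∑ i, ((2 * pd n V i x * u x ^ 2 + 2 * u x * pd n u i x)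
          * (pd n V i x + pd n W i x)) := by
      rw [hGdef, Finset.mul_sum]
      refine Finset.sum_congr rfl (fun i _ => ?_)
      rw [hdF x i, hpψ x i]
      ring
    have hRx : R x = Real.exp (2 * V x) * (gradSq n u x
        - u x ^ 2 * gradSq n V x + u x ^ 2 * gradSq n W x
        + ∑ i, ((2 * pd n V i x * u x ^ 2 + 2 * u x * pd n u i x)
          * (pd n V i x + pd n W i x))) := by
      simp only [hRdef]
      congr 1
      have : ∀ i : Fin n, (pd n u i x + u x * pd n ψ i x) ^ 2
          = (pd n u i x ^ 2 - u x ^ 2 * pd n V i x ^ 2 + u x ^ 2 * pd n W i x ^ 2)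
            + (2 * pd n V i x * u x ^ 2 + 2 * u x * pd n u i x)
              * (pd n V i x + pd n W i x) := by
        intro i
        rw [hpψ x i]
        ring
      rw [Finset.sum_congr rfl (fun i _ => this i), Finset.sum_add_distrib,
        Finset.sum_add_distrib, Finset.sum_sub_distrib, ← Finset.mul_sum, ← Finset.mul_sum]
      simp only [gradSq]
    have hFLx : FL x = Real.exp (2 * V x) * u x ^ 2 * (lap n V x + lap n W x) := by
      simp only [hFLdef, hFdef]
      rw [hlapψ x]
    rw [hPdef, hQdef, hRx, hFLx, hGx]
    ring
  -- second derivatives of V, W agree with those of v, w on U₁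
  have hlapVv : ∀ x ∈ U₁, lap n V x = lap n v x := by
    intro x hx
    unfold lap
    exact Finset.sum_congr rfl (fun i _ => hpdeq _ _ (hpdeq V v hVeq i) i hx)
  have hlapWw : ∀ x ∈ U₁, lap n W x = lap n w x := by
    intro x hx
    unfold lap
    exact Finset.sum_congr rfl (fun i _ => hpdeq _ _ (hpdeq W w hWeq i) i hx)
  have hgradVv : ∀ x ∈ U₁, gradSq n V x = gradSq n v x := by
    intro x hx
    unfold gradSq
    exact Finset.sum_congr rfl (fun i _ => by rw [hpdeq V v hVeq i hx])
  have hgradWw : ∀ x ∈ U₁, gradSq n W x = gradSq n w x := by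
    intro x hx
    unfold gradSq
    exact Finset.sum_congr rfl (fun i _ => by rw [hpdeq W w hWeq i hx])
  -- identify the set integrals with the global ones
  rw [ge_iff_le, ← integral_indicator hΩ.measurableSet, ← integral_indicator hΩ.measurableSet]
  have hPind : (Ω.indicator fun x => Real.exp (2 * v x) * gradSq n u x) = P := by
    funext x
    by_cases hK : x ∈ tsupport u
    · rw [Set.indicator_of_mem (huΩ hK)]
      simp only [hPdef]
      rw [hVeq (hU₁s hK)]
    · have hg : gradSq n u x = 0 := by simp [gradSq, hdu0 x hK]
      by_cases hΩx : x ∈ Ω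
      · rw [Set.indicator_of_mem hΩx]; simp only [hPdef]; rw [hg]; ring
      · rw [Set.indicator_of_notMem hΩx]; simp only [hPdef]; rw [hg]; ring
  have hQind : (Ω.indicator fun x => Real.exp (2 * v x) *
      (lap n v x + lap n w x + gradSq n v x - gradSq n w x) * u x ^ 2) = Q := by
    funext x
    by_cases hK : x ∈ tsupport u
    · rw [Set.indicator_of_mem (huΩ hK)]
      simp only [hQdef]
      rw [hVeq (hU₁s hK), hlapVv x (hU₁s hK), hlapWw x (hU₁s hK),
        hgradVv x (hU₁s hK), hgradWw x (hU₁s hK)]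
    · have hz : u x = 0 := hu0 x hK
      by_cases hΩx : x ∈ Ω
      · rw [Set.indicator_of_mem hΩx]; simp only [hQdef]; rw [hz]; ring
      · rw [Set.indicator_of_notMem hΩx]; simp only [hQdef]; rw [hz]; ring
  rw [hPind, hQind]
  -- conclusion
  have hRnn : 0 ≤ ∫ x, R x := by
    refine integral_nonneg (fun x => ?_)
    simp only [hRdef]
    exact mul_nonneg (Real.exp_pos _).le
      (Finset.sum_nonneg (fun i _ => sq_nonneg _))
  have hchain : (∫ x, P x) - ∫ x, Q x = ∫ x, R x := by
    calc (∫ x, P x) - ∫ x, Q x = ∫ x, (P x - Q x) := (integral_sub hintP hintQ).symm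
      _ = ∫ x, (R x - FL x - G x) :=
          integral_congr_ae (Filter.Eventually.of_forall hkey)
      _ = (∫ x, (R x - FL x)) - ∫ x, G x :=
          integral_sub (hintR.sub hintFL) hintG
      _ = ((∫ x, R x) - ∫ x, FL x) - ∫ x, G x := by rw [integral_sub hintR hintFL]
      _ = ∫ x, R x := by rw [hFLG]; ring
  linarith
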